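/- Let (X, μ) be a measure space, H a finite-dimensional complex subspace of L²(X, μ; ℂ), P the orthogonal projection of L² onto H, and f, g : X → ℝ bounded measurable functions. Define the Toeplitz operators T_f := P ∘ M_f and T_g := P ∘ M_g on H, and for an orthonormal basis (ψ_i) of H with chosen measurable representatives set K(x,y) := Σ_i ψ_i(x) · conj(ψ_i(y)). Then the trace of T_f ∘ T_g equals ∫_X ∫_X f(x) g(y) |K(x,y)|² dμ(x) dμ(y). -/

import Mathlib

open MeasureTheory

lemma trace_onb {E : Type*} [NormedAddCommGroup E] [InnerProductSpace ℂ E]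
    [FiniteDimensional ℂ E] {n : ℕ} (b : OrthonormalBasis (Fin n) ℂ E) (T : E →ₗ[ℂ] E) :
    LinearMap.trace ℂ E T = ∑ i, @inner ℂ _ _ (b i) (T (b i)) := by
  rw [LinearMap.trace_eq_matrix_trace ℂ b.toBasis, Matrix.trace]
  simp [Matrix.diag, LinearMap.toMatrix_apply, OrthonormalBasis.coe_toBasis,
    OrthonormalBasis.coe_toBasis_repr_apply, OrthonormalBasis.repr_apply_apply]


/-- (Trace of a product of Toeplitz operators.) Let `H` be a finite-dimensional
subspace of `L²(X, μ; ℂ)`, `P` the orthogonal projection onto `H`, and `f, g` bounded measurable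
real symbols with multiplication operators `M_f, M_g` on `L²`. Then the trace of
`T_f ∘ T_g = (P ∘ M_f) ∘ (P ∘ M_g) : H → H` equals
`∫∫ f(x) g(y) |K(x,y)|² dμ(x) dμ(y)`, where `K(x,y) = Σ_i ψ_i(x) conj(ψ_i(y))` is the Bergman
kernel built from measurable representatives of an orthonormal basis `(ψ_i)` of `H`. -/
theorem toeplitz_product_trace_eq_double_integral
    {X : Type*} [MeasurableSpace X] (μ : Measure X)
    (H : Submodule ℂ (Lp ℂ 2 μ)) [FiniteDimensional ℂ H]
    (f g : X → ℝ) (hf_meas : Measurable f) (hg_meas : Measurable g)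
    (Cf Cg : ℝ) (hf_bdd : ∀ x, |f x| ≤ Cf) (hg_bdd : ∀ x, |g x| ≤ Cg)
    (Mf Mg : Lp ℂ 2 μ →ₗ[ℂ] Lp ℂ 2 μ)
    (hMf : ∀ α : Lp ℂ 2 μ, ⇑(Mf α) =ᵐ[μ] fun x => (f x : ℂ) * α x)
    (hMg : ∀ α : Lp ℂ 2 μ, ⇑(Mg α) =ᵐ[μ] fun x => (g x : ℂ) * α x)
    {n : ℕ} (ψ : OrthonormalBasis (Fin n) ℂ H)
    (ψrep : Fin n → X → ℂ) (hψ_meas : ∀ i, Measurable (ψrep i))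
    (hψ : ∀ i, ψrep i =ᵐ[μ] ⇑(ψ i : Lp ℂ 2 μ)) :
    LinearMap.trace ℂ H
        (((H.orthogonalProjection).toLinearMap ∘ₗ Mf ∘ₗ H.subtype) ∘ₗ
          ((H.orthogonalProjection).toLinearMap ∘ₗ Mg ∘ₗ H.subtype))
      = ((∫ y, ∫ x,
            f x * g y * ‖∑ i, ψrep i x * (starRingEnd ℂ) (ψrep i y)‖ ^ 2 ∂μ ∂μ : ℝ) : ℂ) := by
  classical
  set A : Fin n → Fin n → ℂ := fun i j => ∫ x, (f x : ℂ) * ψrep i x * (starRingEnd ℂ) (ψrep j x) ∂μ with hA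
  set B : Fin n → Fin n → ℂ := fun i j => ∫ x, (g x : ℂ) * ψrep i x * (starRingEnd ℂ) (ψrep j x) ∂μ with hB
  -- integrability
  have hbase : ∀ i j : Fin n, Integrable (fun x => ψrep i x * (starRingEnd ℂ) (ψrep j x)) μ := by
    intro i j
    have h := L2.integrable_inner (𝕜 := ℂ) ((ψ j : Lp ℂ 2 μ)) ((ψ i : Lp ℂ 2 μ))
    simp_rw [RCLike.inner_apply] at h
    refine h.congr ?_
    filter_upwards [hψ i, hψ j] with x hi hj
    rw [hi, hj, mul_comm]
  have hIf : ∀ i j : Fin n, Integrable (fun x => (f x : ℂ) * ψrep i x * (starRingEnd ℂ) (ψrep j x)) μ := by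
    intro i j
    have := ((hbase i j).bdd_mul (f := fun x => (f x : ℂ))
      (Complex.measurable_ofReal.comp hf_meas).aestronglyMeasurable
      (Filter.Eventually.of_forall fun x => by simpa using hf_bdd x))
    simpa [mul_assoc] using this
  have hIg : ∀ i j : Fin n, Integrable (fun x => (g x : ℂ) * ψrep i x * (starRingEnd ℂ) (ψrep j x)) μ := by
    intro i j
    have := ((hbase i j).bdd_mul (f := fun x => (g x : ℂ))
      (Complex.measurable_ofReal.comp hg_meas).aestronglyMeasurable
      (Filter.Eventually.of_forall fun x => by simpa using hg_bdd x))
    simpa [mul_assoc] using this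
  -- inner products as integrals
  have hinner_f : ∀ i j : Fin n,
      (@inner ℂ _ _ ((ψ i : Lp ℂ 2 μ)) (Mf (ψ j : Lp ℂ 2 μ))) = A j i := by
    intro i j
    rw [L2.inner_def]
    simp_rw [RCLike.inner_apply]
    refine integral_congr_ae ?_
    filter_upwards [hψ i, hψ j, hMf (ψ j : Lp ℂ 2 μ)] with x hi hj hm
    rw [← hi, hm, ← hj]
  have hinner_g : ∀ i j : Fin n,
      (@inner ℂ _ _ ((ψ i : Lp ℂ 2 μ)) (Mg (ψ j : Lp ℂ 2 μ))) = B j i := by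
    intro i j
    rw [L2.inner_def]
    simp_rw [RCLike.inner_apply]
    refine integral_congr_ae ?_
    filter_upwards [hψ i, hψ j, hMg (ψ j : Lp ℂ 2 μ)] with x hi hj hm
    rw [← hi, hm, ← hj]
  -- LHS
  have hL : LinearMap.trace ℂ H
        (((H.orthogonalProjection).toLinearMap ∘ₗ Mf ∘ₗ H.subtype) ∘ₗ
          ((H.orthogonalProjection).toLinearMap ∘ₗ Mg ∘ₗ H.subtype))
      = ∑ i, ∑ j, B i j * A j i := by
    rw [trace_onb ψ]
    refine Finset.sum_congr rfl fun i _ => ?_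
    simp only [LinearMap.comp_apply, ContinuousLinearMap.coe_coe, Submodule.subtype_apply]
    rw [Submodule.inner_orthogonalProjection_eq_of_mem_left]
    have hexp : ((H.orthogonalProjection (Mg (ψ i : Lp ℂ 2 μ)) : H) : Lp ℂ 2 μ)
        = ∑ j, (@inner ℂ _ _ ((ψ j : Lp ℂ 2 μ)) (Mg (ψ i : Lp ℂ 2 μ))) • (ψ j : Lp ℂ 2 μ) := by
      conv_lhs => rw [← ψ.sum_repr' (H.orthogonalProjection (Mg (ψ i : Lp ℂ 2 μ)))]
      push_cast
      refine Finset.sum_congr rfl fun j _ => ?_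
      rw [Submodule.inner_orthogonalProjection_eq_of_mem_left]
    rw [hexp, map_sum, inner_sum]
    refine Finset.sum_congr rfl fun j _ => ?_
    rw [LinearMap.map_smul, inner_smul_right, hinner_f i j, hinner_g j i]
  rw [hL]
  -- RHS
  have hKconj : ∀ x y : X, (starRingEnd ℂ) (∑ i, ψrep i x * (starRingEnd ℂ) (ψrep i y))
      = ∑ j, (starRingEnd ℂ) (ψrep j x) * ψrep j y := by
    intro x y; rw [map_sum]; exact Finset.sum_congr rfl fun j _ => by
      rw [map_mul, RingHomCompTriple.comp_apply]; simp
  have hcast : ∀ (F : X → ℝ), ((∫ x, F x ∂μ : ℝ) : ℂ) = ∫ x, ((F x : ℝ) : ℂ) ∂μ :=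
    fun F => (integral_ofReal (𝕜 := ℂ)).symm
  have hx : ∀ y : X,
      ((∫ x, f x * g y * ‖∑ i, ψrep i x * (starRingEnd ℂ) (ψrep i y)‖ ^ 2 ∂μ : ℝ) : ℂ)
      = ∑ i, ∑ j, ((g y : ℂ) * ψrep j y * (starRingEnd ℂ) (ψrep i y)) * A i j := by
    intro y
    rw [hcast]
    have hpt : ∀ x : X,
        ((f x * g y * ‖∑ i, ψrep i x * (starRingEnd ℂ) (ψrep i y)‖ ^ 2 : ℝ) : ℂ)
        = ∑ i, ∑ j, ((g y : ℂ) * ψrep j y * (starRingEnd ℂ) (ψrep i y)) *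
            ((f x : ℂ) * ψrep i x * (starRingEnd ℂ) (ψrep j x)) := by
      intro x
      push_cast
      have hms : ((‖∑ i, ψrep i x * (starRingEnd ℂ) (ψrep i y)‖ : ℝ) : ℂ) ^ 2
          = (∑ i, ψrep i x * (starRingEnd ℂ) (ψrep i y)) *
            (starRingEnd ℂ) (∑ i, ψrep i x * (starRingEnd ℂ) (ψrep i y)) := by
        rw [Complex.mul_conj]
        norm_cast
        rw [Complex.sq_norm]
      rw [hms, hKconj]
      simp only [Finset.sum_mul, Finset.mul_sum]
      rw [Finset.sum_comm]
      refine Finset.sum_congr rfl fun i _ => ?_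
      refine Finset.sum_congr rfl fun j _ => ?_
      ring
    simp_rw [hpt]
    rw [integral_finset_sum _ (fun i _ =>
      integrable_finset_sum _ (fun j _ => ((hIf i j).const_mul _)))]
    refine Finset.sum_congr rfl fun i _ => ?_
    rw [integral_finset_sum _ (fun j _ => ((hIf i j).const_mul _))]
    exact Finset.sum_congr rfl fun j _ => integral_const_mul _ _
  rw [hcast]
  simp_rw [hx]
  rw [integral_finset_sum _ (fun i _ =>
    integrable_finset_sum _ (fun j _ => ((hIg j i).mul_const _)))]
  rw [Finset.sum_comm]
  refine Finset.sum_congr rfl fun j _ => ?_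
  rw [integral_finset_sum _ (fun i _ => ((hIg i j).mul_const _))]
  refine Finset.sum_congr rfl fun i _ => ?_
  rw [integral_mul_const]
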